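/- Let B ∈ ℝ^{s×n}, c ∈ ℝ^s, and x⋆ ∈ ℝⁿ with B x⋆ = c. Fix a row index i of B with B^{(i)} ≠ 0 and a point x ∈ ℝⁿ. Let x^M = x + ((c^{(i)} − B^{(i)}x)/‖B^{(i)}‖₂²)(B^{(i)})ᵀ be the Kaczmarz update of x using row i, and let x^B ∈ ℝⁿ satisfy B x^B = c and x^B − x ∈ R(Bᵀ) (the block Kaczmarz update of x using all rows of B). Then ‖x^M − x‖₂² ≤ ‖x^B − x‖₂² and ‖x^B − x⋆‖₂² ≤ ‖x^M − x⋆‖₂². -/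

import Mathlib

open Matrix

/-- Remark 5: the single-row Kaczmarz (Motzkin) step `x^M` moves at most as
far as the block Kaczmarz step `x^B` (orthogonal projection onto `{y : By = c}`,
characterized by `Bx^B = c` and `x^B − x ∈ R(Bᵀ)`), and the block step ends at least as
close to the solution `x⋆`. -/
theorem gmbk_vs_grmk_step (s n : ℕ)
    (B : Matrix (Fin s) (Fin n) ℝ) (c : Fin s → ℝ)
    (xs : Fin n → ℝ) (hxs : B.mulVec xs = c)
    (i : Fin s) (hrow : (fun j => B i j) ≠ 0)
    (x : Fin n → ℝ)
    (xM : Fin n → ℝ)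
    (hxM : xM = x + ((c i - B.mulVec x i) / ∑ j, (B i j) ^ 2) • (fun j => B i j))
    (xB : Fin n → ℝ)
    (hxBsol : B.mulVec xB = c)
    (hxBmem : ∃ z : Fin s → ℝ, xB - x = Bᵀ.mulVec z) :
    (∑ j, (xM j - x j) ^ 2 ≤ ∑ j, (xB j - x j) ^ 2) ∧
    (∑ j, (xB j - xs j) ^ 2 ≤ ∑ j, (xM j - xs j) ^ 2) := by
  obtain ⟨z, hz⟩ := hxBmem
  set a : Fin n → ℝ := fun j => B i j with ha
  set S : ℝ := ∑ j, (B i j) ^ 2 with hS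
  have hSpos : 0 < S := by
    rcases Function.ne_iff.1 hrow with ⟨j0, hj0⟩
    exact Finset.sum_pos' (fun j _ => sq_nonneg _)
      ⟨j0, Finset.mem_univ _, by simpa using pow_pos (abs_pos.mpr hj0) 2 |>.trans_le (by rw [sq_abs])⟩
  set r : ℝ := c i - B.mulVec x i with hr
  -- r = ⟪a, xB - x⟫
  have hrinner : r = ∑ j, a j * (xB j - x j) := by
    have : B.mulVec xB i = c i := congrFun hxBsol i
    simp only [hr, ← this, mulVec, dotProduct]
    rw [← Finset.sum_sub_distrib]
    exact Finset.sum_congr rfl fun j _ => by ring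
  -- xM j - x j = (r / S) * a j
  have hxMd : ∀ j, xM j - x j = (r / S) * a j := by
    intro j; rw [hxM]; simp only [Pi.add_apply, Pi.smul_apply, smul_eq_mul]; ring
  -- B (xB - xs) = 0
  have hker : ∀ k, ∑ j, B k j * (xB j - xs j) = 0 := by
    intro k
    have h1 : B.mulVec xB k = c k := congrFun hxBsol k
    have h2 : B.mulVec xs k = c k := congrFun hxs k
    have : ∑ j, B k j * (xB j - xs j)
        = B.mulVec xB k - B.mulVec xs k := by
      simp only [mulVec, dotProduct, ← Finset.sum_sub_distrib]
      exact Finset.sum_congr rfl fun j _ => by ring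
    rw [this, h1, h2, sub_self]
  constructor
  · -- first inequality
    have hcs := Finset.sum_mul_sq_le_sq_mul_sq Finset.univ a (fun j => xB j - x j)
    have hsum : ∑ j, (xM j - x j) ^ 2 = r ^ 2 / S := by
      simp_rw [hxMd, mul_pow]
      rw [← Finset.mul_sum, ← hS]
      field_simp
    rw [hsum, div_le_iff₀ hSpos]
    calc r ^ 2 = (∑ j, a j * (xB j - x j)) ^ 2 := by rw [hrinner]
      _ ≤ (∑ j, a j ^ 2) * ∑ j, (xB j - x j) ^ 2 := hcs
      _ = (∑ j, (xB j - x j) ^ 2) * S := by rw [mul_comm]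
  · -- second inequality : Pythagoras
    have horth : ∑ j, (xM j - xB j) * (xB j - xs j) = 0 := by
      have hd : ∀ j, xM j - xB j = (r / S) * a j - (xB j - x j) := by
        intro j; have := hxMd j; linarith [hxMd j]
      have h1 : ∑ j, a j * (xB j - xs j) = 0 := hker i
      have h2 : ∑ j, (xB j - x j) * (xB j - xs j) = 0 := by
        have hzj : ∀ j, xB j - x j = ∑ k, B k j * z k := by
          intro j
          have := congrFun hz j
          simpa [mulVec, dotProduct, transpose_apply] using this
        calc ∑ j, (xB j - x j) * (xB j - xs j)
            = ∑ j, ∑ k, z k * (B k j * (xB j - xs j)) := by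
              refine Finset.sum_congr rfl fun j _ => ?_
              rw [hzj j, Finset.sum_mul]
              exact Finset.sum_congr rfl fun k _ => by ring
          _ = ∑ k, z k * ∑ j, B k j * (xB j - xs j) := by
              rw [Finset.sum_comm]
              exact Finset.sum_congr rfl fun k _ => by rw [Finset.mul_sum]
          _ = 0 := by simp [hker]
      calc ∑ j, (xM j - xB j) * (xB j - xs j)
          = (r / S) * (∑ j, a j * (xB j - xs j))
            - ∑ j, (xB j - x j) * (xB j - xs j) := by
            rw [Finset.mul_sum, ← Finset.sum_sub_distrib]
            refine Finset.sum_congr rfl fun j _ => ?_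
            rw [hd j]; ring
        _ = 0 := by rw [h1, h2]; ring
    have hexp : ∑ j, (xM j - xs j) ^ 2
        = ∑ j, (xM j - xB j) ^ 2 + 2 * (∑ j, (xM j - xB j) * (xB j - xs j))
          + ∑ j, (xB j - xs j) ^ 2 := by
      rw [Finset.mul_sum, ← Finset.sum_add_distrib, ← Finset.sum_add_distrib]
      exact Finset.sum_congr rfl fun j _ => by ring
    have hnn : 0 ≤ ∑ j, (xM j - xB j) ^ 2 :=
      Finset.sum_nonneg fun j _ => sq_nonneg _
    rw [hexp, horth]
    linarith
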